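/- For the list type L_A = ∀α. !(A ⊸ α ⊸ α) ⊸ §(α ⊸ α) in λ_LAL and any type B, there is a closed λ_LAL term fold_B of type !(A ⊸ B ⊸ B) ⊸ §B ⊸ L_A ⊸ §B implementing list fold: applied to !s, §b and the Church encoding of a list (a_1, …, a_n), it reduces to §((s)a_1((s)a_2(…((s)a_n b)…))). -/

import Mathlib

set_option maxHeartbeats 1000000

/-! ## Terms of the light affine lambda-calculus λ_LAL (de Bruijn indices) -/

inductive Tm : Type where
  | var : ℕ → Tm
  | lam : Tm → Tm
  | app : Tm → Tm → Tm
  | bang : Tm → Tm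
  /-- `letBang u t` is `let u be !x in t`; `t` binds de Bruijn index 0. -/
  | letBang : Tm → Tm → Tm
  | para : Tm → Tm
  /-- `letPara u t` is `let u be §x in t`; `t` binds de Bruijn index 0. -/
  | letPara : Tm → Tm → Tm

namespace LAL

def upRen (f : ℕ → ℕ) : ℕ → ℕ
  | 0 => 0
  | n + 1 => f n + 1

def rename (f : ℕ → ℕ) : Tm → Tm
  | .var n => .var (f n)
  | .lam t => .lam (rename (upRen f) t)
  | .app t u => .app (rename f t) (rename f u)
  | .bang t => .bang (rename f t)
  | .letBang u t => .letBang (rename f u) (rename (upRen f) t)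
  | .para t => .para (rename f t)
  | .letPara u t => .letPara (rename f u) (rename (upRen f) t)

/-- Capture-avoiding substitution `t[u / var k]` (indices above `k` are shifted
down). -/
def sub : Tm → ℕ → Tm → Tm
  | .var n, k, u => if n = k then rename (· + k) u else if k < n then .var (n - 1) else .var n
  | .lam t, k, u => .lam (sub t (k + 1) u)
  | .app t v, k, u => .app (sub t k u) (sub v k u)
  | .bang t, k, u => .bang (sub t k u)
  | .letBang v t, k, u => .letBang (sub v k u) (sub t (k + 1) u)
  | .para t, k, u => .para (sub t k u)
  | .letPara v t, k, u => .letPara (sub v k u) (sub t (k + 1) u)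

/-! ## Reduction -/

inductive Rule : Type where
  | beta | bang | para | com1 | com2

/-- One-step reduction of λ_LAL: contextual closure of the rules
(β), (!), (§), (com1), (com2). -/
inductive Step : Rule → Tm → Tm → Prop where
  | beta {t u} : Step .beta (.app (.lam t) u) (sub t 0 u)
  | bang {t u} : Step .bang (.letBang (.bang u) t) (sub t 0 u)
  | para {t u} : Step .para (.letPara (.para u) t) (sub t 0 u)
  | com1BB {u₁ t₁ t₂} : Step .com1 (.letBang (.letBang u₁ t₁) t₂)
      (.letBang u₁ (.letBang t₁ (rename (upRen (· + 1)) t₂)))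
  | com1BP {u₁ t₁ t₂} : Step .com1 (.letPara (.letBang u₁ t₁) t₂)
      (.letBang u₁ (.letPara t₁ (rename (upRen (· + 1)) t₂)))
  | com1PB {u₁ t₁ t₂} : Step .com1 (.letBang (.letPara u₁ t₁) t₂)
      (.letPara u₁ (.letBang t₁ (rename (upRen (· + 1)) t₂)))
  | com1PP {u₁ t₁ t₂} : Step .com1 (.letPara (.letPara u₁ t₁) t₂)
      (.letPara u₁ (.letPara t₁ (rename (upRen (· + 1)) t₂)))
  | com2B {u₁ t₁ t₂} : Step .com2 (.app (.letBang u₁ t₁) t₂)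
      (.letBang u₁ (.app t₁ (rename (· + 1) t₂)))
  | com2P {u₁ t₁ t₂} : Step .com2 (.app (.letPara u₁ t₁) t₂)
      (.letPara u₁ (.app t₁ (rename (· + 1) t₂)))
  | congLam {r t t'} : Step r t t' → Step r (.lam t) (.lam t')
  | congApp₁ {r t t' u} : Step r t t' → Step r (.app t u) (.app t' u)
  | congApp₂ {r t u u'} : Step r u u' → Step r (.app t u) (.app t u')
  | congBang {r t t'} : Step r t t' → Step r (.bang t) (.bang t')
  | congPara {r t t'} : Step r t t' → Step r (.para t) (.para t')
  | congLetBang₁ {r u u' t} : Step r u u' → Step r (.letBang u t) (.letBang u' t)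
  | congLetBang₂ {r u t t'} : Step r t t' → Step r (.letBang u t) (.letBang u t')
  | congLetPara₁ {r u u' t} : Step r u u' → Step r (.letPara u t) (.letPara u' t)
  | congLetPara₂ {r u t t'} : Step r t t' → Step r (.letPara u t) (.letPara u t')

/-- Many-step reduction. -/
def Red : Tm → Tm → Prop := Relation.ReflTransGen (fun a b => ∃ r, Step r a b)

/-! ## Types of intuitionistic Light Affine Logic -/

inductive Ty : Type where
  | tvar : ℕ → Ty
  | lolli : Ty → Ty → Ty
  | bang : Ty → Ty
  | para : Ty → Ty
  | all : Ty → Ty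

def liftTy (c : ℕ) : Ty → Ty
  | .tvar n => if n < c then .tvar n else .tvar (n + 1)
  | .lolli A B => .lolli (liftTy c A) (liftTy c B)
  | .bang A => .bang (liftTy c A)
  | .para A => .para (liftTy c A)
  | .all A => .all (liftTy (c + 1) A)

def substTy : Ty → ℕ → Ty → Ty
  | .tvar n, k, B => if n = k then (liftTy 0)^[k] B else if k < n then .tvar (n - 1) else .tvar n
  | .lolli A C, k, B => .lolli (substTy A k B) (substTy C k B)
  | .bang A, k, B => .bang (substTy A k B)
  | .para A, k, B => .para (substTy A k B)
  | .all A, k, B => .all (substTy A (k + 1) B)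

/-! ## Syntactic sugar: tensor -/

/-- `A ⊗ B = ∀α.((A ⊸ B ⊸ α) ⊸ α)`. -/
def tensorTy (A B : Ty) : Ty :=
  .all (.lolli (.lolli (liftTy 0 A) (.lolli (liftTy 0 B) (.tvar 0))) (.tvar 0))

/-- `t ⊗ u = λy.((y)t)u`. -/
def tensorTm (t u : Tm) : Tm :=
  .lam (.app (.app (.var 0) (rename (· + 1) t)) (rename (· + 1) u))

/-- `let u be x⊗y in t = (u)λx.λy.t`; in `t`, index 1 is the first component
and index 0 the second. -/
def letTen (u t : Tm) : Tm := .app u (.lam (.lam t))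

/-! ## Typing (natural-deduction presentation of LAL, with discharged marks) -/

inductive Mark : Type where
  | pl  -- plain
  | db  -- !-discharged
  | dp  -- §-discharged
  deriving DecidableEq

/-- Transposition of de Bruijn indices `i` and `i+1`. -/
def swapF (i : ℕ) : ℕ → ℕ := fun n => if n = i then i + 1 else if n = i + 1 then i else n

inductive Tj : List (Mark × Ty) → Tm → Ty → Prop where
  | ax (A : Ty) : Tj [(.pl, A)] (.var 0) A
  | weak {Γ t A} (e : Mark × Ty) : Tj Γ t A → Tj (e :: Γ) (rename (· + 1) t) A
  | exch {Γ Δ : List (Mark × Ty)} {a b t A} :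
      Tj (Γ ++ a :: b :: Δ) t A → Tj (Γ ++ b :: a :: Δ) (rename (swapF Γ.length) t) A
  | cntr {Γ t A B} : Tj ((.db, B) :: (.db, B) :: Γ) t A →
      Tj ((.db, B) :: Γ) (rename Nat.pred t) A
  | cut {Γ Δ : List (Mark × Ty)} {u t A C} : Tj Δ u A → Tj ((.pl, A) :: Γ) t C →
      Tj (Γ ++ Δ) (sub t 0 (rename (· + Γ.length) u)) C
  | lam {Γ t A B} : Tj ((.pl, A) :: Γ) t B → Tj Γ (.lam t) (.lolli A B)
  | app {Γ Δ : List (Mark × Ty)} {t u A B} : Tj Γ t (.lolli A B) → Tj Δ u A →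
      Tj (Γ ++ Δ) (.app t (rename (· + Γ.length) u)) B
  | allI {Γ : List (Mark × Ty)} {t A} :
      Tj (Γ.map (fun e => (e.1, liftTy 0 e.2))) t A → Tj Γ t (.all A)
  | allE {Γ t A} (B : Ty) : Tj Γ t (.all A) → Tj Γ t (substTy A 0 B)
  | bangI₀ {t A} : Tj [] t A → Tj [] (.bang t) (.bang A)
  | bangI₁ {t A B} : Tj [(.pl, B)] t A → Tj [(.db, B)] (.bang t) (.bang A)
  | bangE {Γ Δ : List (Mark × Ty)} {u t A C} : Tj Δ u (.bang A) →
      Tj ((.db, A) :: Γ) t C →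
      Tj (Γ ++ Δ) (.letBang (rename (· + Γ.length) u) t) C
  | paraI {Γ Γ' : List (Mark × Ty)} {t A} : Tj Γ t A →
      (∀ e ∈ Γ, e.1 = Mark.pl) →
      List.Forall₂ (fun (e e' : Mark × Ty) => e'.2 = e.2 ∧ e'.1 ≠ Mark.pl) Γ Γ' →
      Tj Γ' (.para t) (.para A)
  | paraE {Γ Δ : List (Mark × Ty)} {u t A C} : Tj Δ u (.para A) →
      Tj ((.dp, A) :: Γ) t C →
      Tj (Γ ++ Δ) (.letPara (rename (· + Γ.length) u) t) C

/-! ## Church encodings -/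

/-- Tally integers : `N = ∀α. !(α ⊸ α) ⊸ §(α ⊸ α)`. -/
def natTy : Ty := .all (.lolli (.bang (.lolli (.tvar 0) (.tvar 0)))
  (.para (.lolli (.tvar 0) (.tvar 0))))

/-- Church numeral `n̲` of type `N`. -/
def churchNat (n : ℕ) : Tm :=
  .lam (.letBang (.var 0) (.para (.lam ((fun b => Tm.app (.var 1) b)^[n] (.var 0)))))

/-- Lists of elements of type `A` : `L_A = ∀α. !(A ⊸ α ⊸ α) ⊸ §(α ⊸ α)`. -/
def listTy (A : Ty) : Ty := .all (.lolli (.bang (.lolli (liftTy 0 A)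
  (.lolli (.tvar 0) (.tvar 0)))) (.para (.lolli (.tvar 0) (.tvar 0))))

/-- Church encoding of the list whose elements are the terms `as`. -/
def encListTm (as : List Tm) : Tm :=
  .lam (.letBang (.var 0) (.para (.lam
    (as.foldr (fun a acc => Tm.app (.app (.var 1) (rename (· + 3) a)) acc) (.var 0)))))

/-! ## Pure lambda-terms, β-reduction, and system F -/

inductive PTm : Type where
  | var : ℕ → PTm
  | lam : PTm → PTm
  | app : PTm → PTm → PTm

def prename (f : ℕ → ℕ) : PTm → PTm
  | .var n => .var (f n)
  | .lam t => .lam (prename (upRen f) t)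
  | .app t u => .app (prename f t) (prename f u)

def psub : PTm → ℕ → PTm → PTm
  | .var n, k, u => if n = k then prename (· + k) u else if k < n then .var (n - 1) else .var n
  | .lam t, k, u => .lam (psub t (k + 1) u)
  | .app t v, k, u => .app (psub t k u) (psub v k u)

/-- β-reduction of the pure lambda-calculus (one step, contextual). -/
inductive PStep : PTm → PTm → Prop where
  | beta {t u} : PStep (.app (.lam t) u) (psub t 0 u)
  | congLam {t t'} : PStep t t' → PStep (.lam t) (.lam t')
  | congApp₁ {t t' u} : PStep t t' → PStep (.app t u) (.app t' u)
  | congApp₂ {t u u'} : PStep u u' → PStep (.app t u) (.app t u')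

/-- Zero or more β-reduction steps. -/
def PRed : PTm → PTm → Prop := Relation.ReflTransGen PStep

/-- Erasure of λ_LAL terms to pure lambda-terms. -/
def eraseTm : Tm → PTm
  | .var n => .var n
  | .lam t => .lam (eraseTm t)
  | .app t u => .app (eraseTm t) (eraseTm u)
  | .bang t => eraseTm t
  | .para t => eraseTm t
  | .letBang u t => psub (eraseTm t) 0 (eraseTm u)
  | .letPara u t => psub (eraseTm t) 0 (eraseTm u)

/-- Types of system F. -/
inductive FTy : Type where
  | tvar : ℕ → FTy
  | arr : FTy → FTy → FTy
  | all : FTy → FTy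

def liftF (c : ℕ) : FTy → FTy
  | .tvar n => if n < c then .tvar n else .tvar (n + 1)
  | .arr A B => .arr (liftF c A) (liftF c B)
  | .all A => .all (liftF (c + 1) A)

def substF : FTy → ℕ → FTy → FTy
  | .tvar n, k, B => if n = k then (liftF 0)^[k] B else if k < n then .tvar (n - 1) else .tvar n
  | .arr A C, k, B => .arr (substF A k B) (substF C k B)
  | .all A, k, B => .all (substF A (k + 1) B)

/-- Erasure of LAL formulas to system F types. -/
def eraseTy : Ty → FTy
  | .tvar n => .tvar n
  | .lolli A B => .arr (eraseTy A) (eraseTy B)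
  | .bang A => eraseTy A
  | .para A => eraseTy A
  | .all A => .all (eraseTy A)

/-- System F typing. -/
inductive FTj : List FTy → PTm → FTy → Prop where
  | var {Γ n A} : Γ[n]? = some A → FTj Γ (.var n) A
  | lam {Γ t A B} : FTj (A :: Γ) t B → FTj Γ (.lam t) (.arr A B)
  | app {Γ t u A B} : FTj Γ t (.arr A B) → FTj Γ u A → FTj Γ (.app t u) B
  | allI {Γ t A} : FTj (Γ.map (liftF 0)) t A → FTj Γ t (.all A)
  | allE {Γ t A} (B : FTy) : FTj Γ t (.all A) → FTj Γ t (substF A 0 B)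

end LAL

namespace LAL

lemma upRen_comp (f g : ℕ → ℕ) : upRen (f ∘ g) = upRen f ∘ upRen g := by
  funext n; cases n <;> simp [upRen]

lemma rename_comp (t : Tm) : ∀ f g : ℕ → ℕ, rename f (rename g t) = rename (f ∘ g) t := by
  induction t <;> intro f g <;> simp [rename, upRen_comp, *]

lemma upRen_id : upRen id = id := by
  funext n; cases n <;> simp [upRen]

lemma rename_id (t : Tm) : rename id t = t := by
  induction t <;> simp [rename, upRen_id, *]

@[simp] lemma rename_shift_zero (t : Tm) : rename (· + 0) t = t := by
  have : ((· + 0) : ℕ → ℕ) = id := by funext n; rfl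
  rw [this, rename_id]

@[simp] lemma upRen_id_fun : upRen (fun n : ℕ => n) = (fun n : ℕ => n) := by
  funext n; cases n <;> simp [upRen]

@[simp] lemma rename_id_fun (t : Tm) : rename (fun n : ℕ => n) t = t := by
  have h : ((fun n : ℕ => n) : ℕ → ℕ) = id := rfl
  rw [h, rename_id]

lemma sub_rename (t : Tm) : ∀ (f : ℕ → ℕ) (k : ℕ) (u : Tm), (∀ n, f n ≠ k) →
    sub (rename f t) k u = rename (fun n => if k < f n then f n - 1 else f n) t := by
  have key : ∀ (f : ℕ → ℕ) (k : ℕ), (fun n => if k + 1 < upRen f n then upRen f n - 1 else upRen f n)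
      = upRen (fun n => if k < f n then f n - 1 else f n) := by
    intro f k; funext n; cases n with
    | zero => simp [upRen]
    | succ m =>
      show (if k + 1 < f m + 1 then f m + 1 - 1 else f m + 1) = (if k < f m then f m - 1 else f m) + 1
      split_ifs <;> omega
  induction t <;> intro f k u hf
  case var n =>
    simp only [rename, sub, hf n, if_false]
    split <;> rfl
  case lam t ih =>
    have hf' : ∀ n, upRen f n ≠ k + 1 := by
      intro n; cases n with
      | zero => simp [upRen]
      | succ m => simpa [upRen] using hf m
    simp only [rename, sub, ih (upRen f) (k+1) u hf', key]
  case app t u' iht ihu =>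
    simp only [rename, sub, iht f k u hf, ihu f k u hf]
  case bang t ih =>
    simp only [rename, sub, ih f k u hf]
  case letBang v t ihv iht =>
    have hf' : ∀ n, upRen f n ≠ k + 1 := by
      intro n; cases n with
      | zero => simp [upRen]
      | succ m => simpa [upRen] using hf m
    simp only [rename, sub, ihv f k u hf, iht (upRen f) (k+1) u hf', key]
  case para t ih =>
    simp only [rename, sub, ih f k u hf]
  case letPara v t ihv iht =>
    have hf' : ∀ n, upRen f n ≠ k + 1 := by
      intro n; cases n with
      | zero => simp [upRen]
      | succ m => simpa [upRen] using hf m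
    simp only [rename, sub, ihv f k u hf, iht (upRen f) (k+1) u hf', key]

lemma sub_shift (t u : Tm) (k j : ℕ) (h : k ≤ j) :
    sub (rename (fun n => n + (j + 1)) t) k u = rename (fun n => n + j) t := by
  rw [sub_rename t _ _ _ (by intro n; omega)]
  congr 1; funext n; rw [if_pos (by omega)]; omega

@[simp] lemma sub_shift1 (t u : Tm) : sub (rename (· + 1) t) 0 u = t := by
  have h := sub_shift t u 0 0 le_rfl
  simp only [rename_shift_zero] at h
  exact h

@[simp] lemma sub_shift2 (t u : Tm) : sub (rename (· + 2) t) 1 u = rename (· + 1) t :=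
  sub_shift t u 1 1 le_rfl

@[simp] lemma sub_shift20 (t u : Tm) : sub (rename (· + 2) t) 0 u = rename (· + 1) t :=
  sub_shift t u 0 1 (by omega)

@[simp] lemma sub_shift3 (t u : Tm) : sub (rename (· + 3) t) 2 u = rename (· + 2) t :=
  sub_shift t u 2 2 le_rfl

@[simp] lemma rename_up1 (t : Tm) : rename (upRen (· + 1)) (rename (· + 1) t) = rename (· + 2) t := by
  rw [rename_comp]
  have : (upRen (· + 1) ∘ (· + 1) : ℕ → ℕ) = (· + 2) := by
    funext n; simp [upRen, Function.comp]
  rw [this]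

/-- The body of a Church list / fold intermediate. -/
def body (f : Tm) (g : ℕ) (as : List Tm) (z : Tm) : Tm :=
  as.foldr (fun a acc => Tm.app (.app f (rename (· + g) a)) acc) z

lemma encListTm_eq (as : List Tm) :
    encListTm as = .lam (.letBang (.var 0) (.para (.lam (body (.var 1) 3 as (.var 0))))) := rfl

lemma sub_body (f z u : Tm) (j k : ℕ) (as : List Tm) (h : k ≤ j) :
    sub (body f (j+1) as z) k u = body (sub f k u) j as (sub z k u) := by
  induction as with
  | nil => rfl
  | cons a tl ih => simp only [body, List.foldr, sub] at *; rw [ih, sub_shift a u k j h]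

lemma sub_body3 (f z u : Tm) (as : List Tm) :
    sub (body f 3 as z) 2 u = body (sub f 2 u) 2 as (sub z 2 u) := sub_body f z u 2 2 as le_rfl

lemma sub_body2 (f z u : Tm) (as : List Tm) :
    sub (body f 2 as z) 1 u = body (sub f 1 u) 1 as (sub z 1 u) := sub_body f z u 1 1 as le_rfl

lemma sub_body1 (f z u : Tm) (as : List Tm) :
    sub (body f 1 as z) 0 u = body (sub f 0 u) 0 as (sub z 0 u) := sub_body f z u 0 0 as le_rfl

lemma rename_body1 (f z : Tm) (as : List Tm) :
    rename (upRen (· + 1)) (body f 1 as z)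
      = body (rename (upRen (· + 1)) f) 2 as (rename (upRen (· + 1)) z) := by
  induction as with
  | nil => rfl
  | cons a tl ih => simp only [body, List.foldr, rename] at *; rw [ih, rename_up1]

lemma body_zero (f z : Tm) (as : List Tm) :
    body f 0 as z = as.foldr (fun a acc => Tm.app (.app f a) acc) z := by
  induction as with
  | nil => rfl
  | cons a tl ih =>
    simp only [body, List.foldr, rename_shift_zero] at *
    try rw [ih]

lemma red_one {r : Rule} {a b : Tm} (h : Step r a b) : Red a b :=
  Relation.ReflTransGen.single ⟨r, h⟩

lemma substTy_liftTy (A B : Ty) : ∀ c, substTy (liftTy c A) c B = A := by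
  induction A <;> intro c
  case tvar n =>
    simp only [liftTy]
    split_ifs with h
    · simp only [substTy]; rw [if_neg (by omega), if_neg (by omega)]
    · simp only [substTy]; rw [if_neg (by omega), if_pos (by omega)]
      have hn : n + 1 - 1 = n := by omega
      rw [hn]
  all_goals simp [liftTy, substTy, *]

end LAL
open LAL in
/-- For any types `A`, `B` there is a closed term
`fold_B : !(A ⊸ B ⊸ B) ⊸ §B ⊸ L_A ⊸ §B` implementing list fold: applied to
`!s`, `§b` and the Church encoding of a list `(a₁, …, a_n)` it reduces to
`§((s)a₁((s)a₂(…((s)a_n b)…)))`. -/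
theorem fold_exists (A B : Ty) :
    ∃ fold : Tm,
      Tj [] fold (Ty.lolli (Ty.bang (Ty.lolli A (Ty.lolli B B)))
        (Ty.lolli (Ty.para B) (Ty.lolli (listTy A) (Ty.para B)))) ∧
      ∀ (s b : Tm) (as : List Tm),
        Red (Tm.app (Tm.app (Tm.app fold (Tm.bang s)) (Tm.para b)) (encListTm as))
          (Tm.para (as.foldr (fun a acc => Tm.app (Tm.app s a) acc) b)) := by
  refine ⟨.lam (.lam (.lam (.letPara (.app (.var 0) (.var 2))
      (.letPara (.var 2) (.para (.app (.var 1) (.var 0))))))), ?_, ?_⟩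
  · -- typing
    apply Tj.lam
    apply Tj.lam
    apply Tj.lam
    have hty : substTy (.lolli (.bang (.lolli (liftTy 0 A) (.lolli (.tvar 0) (.tvar 0))))
        (.para (.lolli (.tvar 0) (.tvar 0)))) 0 B
        = .lolli (.bang (.lolli A (.lolli B B))) (.para (.lolli B B)) := by
      simp [substTy, substTy_liftTy]
    have h1 : Tj [(.pl, listTy A)] (.var 0)
        (.lolli (.bang (.lolli A (.lolli B B))) (.para (.lolli B B))) := by
      have h := Tj.allE B (Tj.ax (listTy A))
      rw [hty] at h
      exact h
    have h2 : Tj [(.pl, Ty.bang (.lolli A (.lolli B B)))] (.var 0)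
        (Ty.bang (.lolli A (.lolli B B))) := Tj.ax _
    have hu := Tj.app h1 h2
    have hpara : Tj [(.dp, B), (.dp, Ty.lolli B B)] (.para (.app (.var 1) (.var 0))) (.para B) := by
      refine Tj.paraI (Tj.exch (Γ := []) (Tj.app (Γ := [(.pl, Ty.lolli B B)]) (Δ := [(.pl, B)]) (Tj.ax (Ty.lolli B B)) (Tj.ax B))) ?_ ?_
      · intro e he; fin_cases he <;> rfl
      · exact List.Forall₂.cons ⟨rfl, by simp⟩ (List.Forall₂.cons ⟨rfl, by simp⟩ List.Forall₂.nil)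
    have hbody := Tj.paraE (Γ := [(.dp, Ty.lolli B B)]) (Tj.ax (Ty.para B)) hpara
    have h0 := Tj.paraE (Γ := [(.pl, Ty.para B)]) hu hbody
    exact Tj.exch (Γ := []) h0
  · -- reduction
    intro s b as
    have e1 : sub (.lam (.lam (.letPara (.app (.var 0) (.var 2))
          (.letPara (.var 2) (.para (.app (.var 1) (.var 0))))))) 0 (.bang s)
        = .lam (.lam (.letPara (.app (.var 0) (.bang (rename (· + 2) s)))
          (.letPara (.var 2) (.para (.app (.var 1) (.var 0)))))) := by
      simp [sub, rename]
    have e2 : sub (.lam (.letPara (.app (.var 0) (.bang (rename (· + 2) s)))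
          (.letPara (.var 2) (.para (.app (.var 1) (.var 0)))))) 0 (.para b)
        = .lam (.letPara (.app (.var 0) (.bang (rename (· + 1) s)))
          (.letPara (.para (rename (· + 2) b)) (.para (.app (.var 1) (.var 0))))) := by
      simp [sub, rename]
    have e3 : sub (.letPara (.app (.var 0) (.bang (rename (· + 1) s)))
          (.letPara (.para (rename (· + 2) b)) (.para (.app (.var 1) (.var 0))))) 0 (encListTm as)
        = .letPara (.app (encListTm as) (.bang s))
          (.letPara (.para (rename (· + 1) b)) (.para (.app (.var 1) (.var 0)))) := by
      simp [sub, rename, encListTm]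
    have e4 : sub (.letBang (.var 0) (.para (.lam (body (.var 1) 3 as (.var 0))))) 0 (.bang s)
        = .letBang (.bang s) (.para (.lam (body (.var 1) 2 as (.var 0)))) := by
      simp [sub, rename, sub_body3]
    have e5 : sub (.para (.lam (body (.var 1) 2 as (.var 0)))) 0 s
        = .para (.lam (body (rename (· + 1) s) 1 as (.var 0))) := by
      simp [sub, sub_body2]
    have e6 : sub (.letPara (.para (rename (· + 1) b)) (.para (.app (.var 1) (.var 0)))) 0
          (.lam (body (rename (· + 1) s) 1 as (.var 0)))
        = .letPara (.para b) (.para (.app (.lam (body (rename (· + 2) s) 2 as (.var 0))) (.var 0))) := by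
      simp [sub, rename, rename_body1, rename_up1, upRen]
    have e7 : sub (.para (.app (.lam (body (rename (· + 2) s) 2 as (.var 0))) (.var 0))) 0 b
        = .para (.app (.lam (body (rename (· + 1) s) 1 as (.var 0))) b) := by
      simp [sub, sub_body2]
    have e8 : sub (body (rename (· + 1) s) 1 as (.var 0)) 0 b = body s 0 as b := by
      rw [sub_body1]; simp [sub]
    have st1 : Red (.app (.app (.app (.lam (.lam (.lam (.letPara (.app (.var 0) (.var 2))
          (.letPara (.var 2) (.para (.app (.var 1) (.var 0)))))))) (.bang s)) (.para b)) (encListTm as))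
        (.app (.app (.lam (.lam (.letPara (.app (.var 0) (.bang (rename (· + 2) s)))
          (.letPara (.var 2) (.para (.app (.var 1) (.var 0))))))) (.para b)) (encListTm as)) := by
      apply red_one; apply Step.congApp₁; apply Step.congApp₁; rw [← e1]; exact Step.beta
    have st2 : Red (.app (.app (.lam (.lam (.letPara (.app (.var 0) (.bang (rename (· + 2) s)))
          (.letPara (.var 2) (.para (.app (.var 1) (.var 0))))))) (.para b)) (encListTm as))
        (.app (.lam (.letPara (.app (.var 0) (.bang (rename (· + 1) s)))
          (.letPara (.para (rename (· + 2) b)) (.para (.app (.var 1) (.var 0)))))) (encListTm as)) := by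
      apply red_one; apply Step.congApp₁; rw [← e2]; exact Step.beta
    have st3 : Red (.app (.lam (.letPara (.app (.var 0) (.bang (rename (· + 1) s)))
          (.letPara (.para (rename (· + 2) b)) (.para (.app (.var 1) (.var 0)))))) (encListTm as))
        (.letPara (.app (encListTm as) (.bang s))
          (.letPara (.para (rename (· + 1) b)) (.para (.app (.var 1) (.var 0))))) := by
      apply red_one; rw [← e3]; exact Step.beta
    have st4 : Red (.letPara (.app (encListTm as) (.bang s))
          (.letPara (.para (rename (· + 1) b)) (.para (.app (.var 1) (.var 0)))))
        (.letPara (.letBang (.bang s) (.para (.lam (body (.var 1) 2 as (.var 0)))))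
          (.letPara (.para (rename (· + 1) b)) (.para (.app (.var 1) (.var 0))))) := by
      apply red_one; apply Step.congLetPara₁; rw [encListTm_eq, ← e4]; exact Step.beta
    have st5 : Red (.letPara (.letBang (.bang s) (.para (.lam (body (.var 1) 2 as (.var 0)))))
          (.letPara (.para (rename (· + 1) b)) (.para (.app (.var 1) (.var 0)))))
        (.letPara (.para (.lam (body (rename (· + 1) s) 1 as (.var 0))))
          (.letPara (.para (rename (· + 1) b)) (.para (.app (.var 1) (.var 0))))) := by
      apply red_one; apply Step.congLetPara₁; rw [← e5]; exact Step.bang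
    have st6 : Red (.letPara (.para (.lam (body (rename (· + 1) s) 1 as (.var 0))))
          (.letPara (.para (rename (· + 1) b)) (.para (.app (.var 1) (.var 0)))))
        (.letPara (.para b) (.para (.app (.lam (body (rename (· + 2) s) 2 as (.var 0))) (.var 0)))) := by
      apply red_one; rw [← e6]; exact Step.para
    have st7 : Red (.letPara (.para b) (.para (.app (.lam (body (rename (· + 2) s) 2 as (.var 0))) (.var 0))))
        (.para (.app (.lam (body (rename (· + 1) s) 1 as (.var 0))) b)) := by
      apply red_one; rw [← e7]; exact Step.para
    have st8 : Red (.para (.app (.lam (body (rename (· + 1) s) 1 as (.var 0))) b))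
        (.para (body s 0 as b)) := by
      apply red_one; apply Step.congPara; rw [← e8]; exact Step.beta
    rw [← body_zero]
    exact Relation.ReflTransGen.trans st1 (Relation.ReflTransGen.trans st2
      (Relation.ReflTransGen.trans st3 (Relation.ReflTransGen.trans st4
      (Relation.ReflTransGen.trans st5 (Relation.ReflTransGen.trans st6
      (Relation.ReflTransGen.trans st7 st8))))))
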